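/- Let F be a connected graph on r ≥ 3 vertices and let A be a fixed avoidable configuration. Then for every constant ε with 0 < ε < (n(A)−1)/e(A) and every sequence π = π(n) ≤ n^ε / ((r!/aut(F)) · C(n−1, r−1)), the probability that H_F(n,π) contains a copy of A tends to 0 as n → ∞. -/

import Mathlib

open scoped Classical
open Filter Asymptotics

noncomputable section

/-! ### Basic graph quantities -/

/-- The number of edges of a simple graph. -/
def edgeCnt {V : Type*} (G : SimpleGraph V) : ℕ := G.edgeSet.ncard

/-- The 1-density `e(F)/(v(F)-1)` of a graph `F` on `r` vertices. -/
def d1 {r : ℕ} (F : SimpleGraph (Fin r)) : ℝ := (edgeCnt F : ℝ) / ((r : ℝ) - 1)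

/-- `F` is strictly 1-balanced: every proper subgraph `S` with at least 2 vertices and at
least one edge satisfies `d₁(S) < d₁(F)`. -/
def Strictly1Balanced {r : ℕ} (F : SimpleGraph (Fin r)) : Prop :=
  ∀ S : F.Subgraph, S ≠ ⊤ → 2 ≤ S.verts.ncard → 1 ≤ S.edgeSet.ncard →
    (S.edgeSet.ncard : ℝ) / ((S.verts.ncard : ℝ) - 1) < d1 F

/-- The number of automorphisms of `F`. -/
def autCard {r : ℕ} (F : SimpleGraph (Fin r)) : ℕ := Nat.card (F ≃g F)

/-! ### Copies of `F` in a graph, `F`-factors, `F`-isolated vertices -/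

/-- `φ` is a copy of `F` in `G` (an embedding of `F` as a not necessarily induced subgraph). -/
def IsCopyIn {r n : ℕ} (F : SimpleGraph (Fin r)) (G : SimpleGraph (Fin n))
    (φ : Fin r ↪ Fin n) : Prop :=
  ∀ u v, F.Adj u v → G.Adj (φ u) (φ v)

/-- `G` contains an `F`-factor: pairwise vertex-disjoint copies of `F` covering all vertices. -/
def HasFFactor {r n : ℕ} (F : SimpleGraph (Fin r)) (G : SimpleGraph (Fin n)) : Prop :=
  ∃ Φ : Finset (Fin r ↪ Fin n),
    (∀ φ ∈ Φ, IsCopyIn F G φ) ∧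
    (∀ φ ∈ Φ, ∀ ψ ∈ Φ, φ ≠ ψ → ∀ x : Fin n, ¬(x ∈ Set.range φ ∧ x ∈ Set.range ψ)) ∧
    (∀ x : Fin n, ∃ φ ∈ Φ, x ∈ Set.range φ)

/-- Vertex `x` is `F`-isolated in `G`: no copy of `F` in `G` contains `x`. -/
def FIsolated {r n : ℕ} (F : SimpleGraph (Fin r)) (G : SimpleGraph (Fin n)) (x : Fin n) : Prop :=
  ∀ φ : Fin r ↪ Fin n, IsCopyIn F G φ → x ∉ Set.range φ

/-! ### The random graph `G(n,p)` -/

/-- Probability of the event `P` in the Erdős–Rényi random graph `G(n,p)`. -/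
def gnpProb (n : ℕ) (p : ℝ) (P : SimpleGraph (Fin n) → Prop) : ℝ :=
  ∑ G : SimpleGraph (Fin n),
    if P G then p ^ edgeCnt G * (1 - p) ^ (n.choose 2 - edgeCnt G) else 0

/-- The sharp threshold `p* = ((aut F / r!) · ln n / C(n-1, r-1))^(1/e(F))`. -/
def pstar {r : ℕ} (F : SimpleGraph (Fin r)) (n : ℕ) : ℝ :=
  ((autCard F : ℝ) / (r.factorial : ℝ) * Real.log n / ((n - 1).choose (r - 1) : ℝ)) ^
    ((1 : ℝ) / (edgeCnt F : ℝ))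

/-! ### `F`-edges and `F`-graphs -/

/-- An `F`-edge: a pair (vertex set, edge set); the copies of `F` among these are singled out
by `FEdge.IsCopyOf`. -/
abbrev FEdge (V : Type*) := Finset V × Finset (Sym2 V)

/-- `h` is a copy of `F` with vertices in `V`. -/
def FEdge.IsCopyOf {r : ℕ} {V : Type*} (h : FEdge V) (F : SimpleGraph (Fin r)) : Prop :=
  ∃ φ : Fin r → V, Function.Injective φ ∧ (↑h.1 : Set V) = Set.range φ ∧
    (↑h.2 : Set (Sym2 V)) = Sym2.map φ '' F.edgeSet

/-- An `F`-graph: a vertex set together with a set of `F`-edges. -/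
abbrev FGraph (V : Type*) := Finset V × Finset (FEdge V)

/-- Well-formedness of an `F`-graph w.r.t. `F`: every `F`-edge is a copy of `F` with
vertices inside the vertex set. -/
def FGraph.Wf {r : ℕ} {V : Type*} (H : FGraph V) (F : SimpleGraph (Fin r)) : Prop :=
  ∀ h ∈ H.2, FEdge.IsCopyOf h F ∧ h.1 ⊆ H.1

/-- The edge set of the shadow graph of an `F`-graph. -/
def shadowEdges {V : Type*} [DecidableEq V] (H : FGraph V) : Finset (Sym2 V) :=
  H.2.sup Prod.snd

/-- The shadow graph of an `F`-graph. -/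
def shadow {V : Type*} [DecidableEq V] (H : FGraph V) : SimpleGraph V :=
  SimpleGraph.fromEdgeSet ↑(shadowEdges H)

/-- Number of connected components of the shadow graph of `H` (on the vertex set of `H`). -/
def compCount {V : Type*} [DecidableEq V] (H : FGraph V) : ℕ :=
  Nat.card ((shadow H).induce (↑H.1 : Set V)).ConnectedComponent

/-- An `F`-graph is connected if its shadow graph is. -/
def FGraphConnected {V : Type*} [DecidableEq V] (H : FGraph V) : Prop :=
  ((shadow H).induce (↑H.1 : Set V)).Connected

/-- The nullity `n(H) = (r-1)e(H) + c(H) - v(H)` of an `F`-graph. -/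
def nullity (r : ℕ) {V : Type*} [DecidableEq V] (H : FGraph V) : ℤ :=
  ((r : ℤ) - 1) * H.2.card + compCount H - H.1.card

/-- An avoidable configuration: a connected `F`-graph of nullity at least 2. -/
def Avoidable {r : ℕ} {V : Type*} [DecidableEq V] (F : SimpleGraph (Fin r))
    (H : FGraph V) : Prop :=
  FGraph.Wf H F ∧ FGraphConnected H ∧ 2 ≤ nullity r H

/-- The `F`-edge `h` is induced by the `F`-graph `H`: it is a copy of `F`, not an `F`-edge of
`H`, but all its edges lie in the shadow graph of `H`. -/
def InducedBy {r : ℕ} {V : Type*} [DecidableEq V] (F : SimpleGraph (Fin r)) (h : FEdge V)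
    (H : FGraph V) : Prop :=
  FEdge.IsCopyOf h F ∧ h ∉ H.2 ∧ h.2 ⊆ shadowEdges H

/-- `C` is a clean `F`-cycle of length `k`. -/
def IsCleanCycleOfLen {r : ℕ} {V : Type*} [DecidableEq V] (F : SimpleGraph (Fin r))
    (C : FGraph V) (k : ℕ) : Prop :=
  FGraph.Wf C F ∧ C.1 = C.2.sup Prod.fst ∧
  ((k = 2 ∧ ∃ h₁ h₂ : FEdge V, h₁ ≠ h₂ ∧ C.2 = {h₁, h₂} ∧ (h₁.1 ∩ h₂.1).card = 2) ∨
   (3 ≤ k ∧ ∃ h : Fin k → FEdge V, Function.Injective h ∧ C.2 = Finset.image h Finset.univ ∧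
     ∃ v : Fin k → V, Function.Injective v ∧
       (∀ i j : Fin k, ((i : ℕ) + 1) % k = (j : ℕ) → (h i).1 ∩ (h j).1 = {v i}) ∧
       (∀ i j : Fin k, i ≠ j → ((i : ℕ) + 1) % k ≠ (j : ℕ) → ((j : ℕ) + 1) % k ≠ (i : ℕ) →
         (h i).1 ∩ (h j).1 = ∅)))

/-- `C` is a clean `F`-cycle (of some length `k ≥ 2`). -/
def IsCleanCycle {r : ℕ} {V : Type*} [DecidableEq V] (F : SimpleGraph (Fin r))
    (C : FGraph V) : Prop :=
  ∃ k, IsCleanCycleOfLen F C k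

/-- `C` is a sparse clean `F`-cycle: a clean `F`-cycle of length 2 whose two overlap vertices
form an edge of both of its `F`-edges. -/
def IsSparse {r : ℕ} {V : Type*} [DecidableEq V] (F : SimpleGraph (Fin r))
    (C : FGraph V) : Prop :=
  IsCleanCycleOfLen F C 2 ∧ ∃ h₁ h₂ : FEdge V, h₁ ≠ h₂ ∧ C.2 = {h₁, h₂} ∧
    ∃ x y : V, x ≠ y ∧ h₁.1 ∩ h₂.1 = {x, y} ∧ s(x, y) ∈ h₁.2 ∧ s(x, y) ∈ h₂.2

/-! ### The random `F`-graph `H_F(n,π)` -/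

/-- All potential `F`-edges on the vertex set `Fin n`. -/
def allFEdges (r n : ℕ) (F : SimpleGraph (Fin r)) : Finset (FEdge (Fin n)) :=
  Finset.univ.filter fun h => FEdge.IsCopyOf h F

/-- Expectation of `X` under the random `F`-graph `H_F(n,π)`, whose `F`-edge set is a random
subset of `allFEdges r n F`, each `F`-edge present independently with probability `π`. -/
def hfExp (r n : ℕ) (F : SimpleGraph (Fin r)) (π : ℝ)
    (X : Finset (FEdge (Fin n)) → ℝ) : ℝ :=
  ∑ S ∈ (allFEdges r n F).powerset,
    π ^ S.card * (1 - π) ^ ((allFEdges r n F).card - S.card) * X S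

/-- Probability of `P` under the random `F`-graph `H_F(n,π)`. -/
def hfProb (r n : ℕ) (F : SimpleGraph (Fin r)) (π : ℝ)
    (P : Finset (FEdge (Fin n)) → Prop) : ℝ :=
  hfExp r n F π fun S => if P S then 1 else 0

/-! ### Maps, isomorphisms and copies of `F`-graphs -/

/-- Image of an `F`-edge under a vertex map. -/
def FEdge.map {V W : Type*} [DecidableEq W] (ψ : V → W) (h : FEdge V) : FEdge W :=
  (h.1.image ψ, h.2.image (Sym2.map ψ))

/-- Image of an `F`-graph under a vertex map. -/
def FGraph.map {V W : Type*} [DecidableEq V] [DecidableEq W] (ψ : V → W)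
    (H : FGraph V) : FGraph W :=
  (H.1.image ψ, H.2.image (FEdge.map ψ))

/-- `H` is isomorphic to `K` via a vertex bijection mapping `F`-edges to `F`-edges. -/
def FGraph.IsoTo {V W : Type*} [DecidableEq V] [DecidableEq W] (H : FGraph V)
    (K : FGraph W) : Prop :=
  ∃ ψ : V → W, Set.InjOn ψ ↑H.1 ∧ FGraph.map ψ H = K

/-- The number of copies of the `F`-graph `H` among a set `S` of `F`-edges on `Fin n`. -/
def copyCount {V : Type*} [DecidableEq V] (H : FGraph V) {n : ℕ}
    (S : Finset (FEdge (Fin n))) : ℕ :=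
  Nat.card {K : FGraph (Fin n) // K.2 ⊆ S ∧ FGraph.IsoTo H K}

/-- Union of two `F`-graphs. -/
def FGraph.union {V : Type*} [DecidableEq V] (H K : FGraph V) : FGraph V :=
  (H.1 ∪ K.1, H.2 ∪ K.2)

/-! ### d-graphs and the random d-graph `G*(n,p)` -/

/-- A d-graph: vertices, usual edges, and dummy edges (identified with sparse clean
`F`-cycles). -/
abbrev DGraph (V : Type*) := Finset V × Finset (Sym2 V) × Finset (FGraph V)

/-- All potential usual edges on `Fin n`. -/
def allUsual (n : ℕ) : Finset (Sym2 (Fin n)) := Finset.univ.filter fun e => ¬e.IsDiag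

/-- All potential dummy edges on `Fin n`: the sparse clean `F`-cycles. -/
def allDummies (r n : ℕ) (F : SimpleGraph (Fin r)) : Finset (FGraph (Fin n)) :=
  Finset.univ.filter fun C => IsSparse F C

/-- Expectation of `X` under the random d-graph `G*(n,p)`: each usual edge and each dummy
edge is included independently with probability `p`. -/
def dgExp (r n : ℕ) (F : SimpleGraph (Fin r)) (p : ℝ)
    (X : Finset (Sym2 (Fin n)) → Finset (FGraph (Fin n)) → ℝ) : ℝ :=
  ∑ U ∈ (allUsual n).powerset, ∑ D ∈ (allDummies r n F).powerset,
    p ^ (U.card + D.card) *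
      (1 - p) ^ (((allUsual n).card - U.card) + ((allDummies r n F).card - D.card)) * X U D

/-- Probability of `P` under the random d-graph `G*(n,p)`. -/
def dgProb (r n : ℕ) (F : SimpleGraph (Fin r)) (p : ℝ)
    (P : Finset (Sym2 (Fin n)) → Finset (FGraph (Fin n)) → Prop) : ℝ :=
  dgExp r n F p fun U D => if P U D then 1 else 0

/-- Image of a d-graph under a vertex map. -/
def DGraph.map {V W : Type*} [DecidableEq V] [DecidableEq W] (ψ : V → W)
    (K : DGraph V) : DGraph W :=
  (K.1.image ψ, K.2.1.image (Sym2.map ψ), K.2.2.image (FGraph.map ψ))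

/-- `K` is isomorphic to `L` as a d-graph. -/
def DGraph.IsoTo {V W : Type*} [DecidableEq V] [DecidableEq W] (K : DGraph V)
    (L : DGraph W) : Prop :=
  ∃ ψ : V → W, Set.InjOn ψ ↑K.1 ∧ DGraph.map ψ K = L

/-- The number of copies of the d-graph `K` inside the d-graph on `Fin n` with usual edges
`U` and dummy edges `D`. -/
def dCopyCount {V : Type*} [DecidableEq V] (K : DGraph V) {n : ℕ}
    (U : Finset (Sym2 (Fin n))) (D : Finset (FGraph (Fin n))) : ℕ :=
  Nat.card {L : DGraph (Fin n) // L.2.1 ⊆ U ∧ L.2.2 ⊆ D ∧ DGraph.IsoTo K L}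

/-- Union of two d-graphs. -/
def DGraph.union {V : Type*} [DecidableEq V] (K L : DGraph V) : DGraph V :=
  (K.1 ∪ L.1, K.2.1 ∪ L.2.1, K.2.2 ∪ L.2.2)

/-- `G` is the clean d-cycle corresponding to the clean `F`-cycle `C`: the shadow graph of
`C` if `C` is dense, together with the dummy edge `C` if `C` is sparse. -/
def IsCleanDCycleOf {r : ℕ} {V : Type*} [DecidableEq V] (F : SimpleGraph (Fin r))
    (G : DGraph V) (C : FGraph V) : Prop :=
  (IsCleanCycle F C ∧ ¬IsSparse F C ∧ G = (C.1, shadowEdges C, (∅ : Finset (FGraph V)))) ∨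
  (IsSparse F C ∧ G = (C.1, shadowEdges C, ({C} : Finset (FGraph V))))


lemma sum_powerset_weight {α : Type*} [DecidableEq α] (U : Finset α) (p : ℝ) :
    ∑ S ∈ U.powerset, p ^ S.card * (1 - p) ^ (U.card - S.card) = 1 := by
  have h := Finset.prod_add (fun _ : α => p) (fun _ => 1 - p) U
  simp only [add_sub_cancel, Finset.prod_const_one, Finset.prod_const] at h
  calc ∑ S ∈ U.powerset, p ^ S.card * (1 - p) ^ (U.card - S.card)
      = ∑ S ∈ U.powerset, p ^ S.card * (1 - p) ^ (U \ S).card := by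
        refine Finset.sum_congr rfl fun t ht => ?_
        rw [Finset.card_sdiff_of_subset (Finset.mem_powerset.mp ht)]
    _ = 1 := h.symm

lemma cond_sum {α : Type*} [DecidableEq α] (U T : Finset α) (hT : T ⊆ U) (p : ℝ) :
    ∑ S ∈ U.powerset, p ^ S.card * (1 - p) ^ (U.card - S.card) * (if T ⊆ S then (1:ℝ) else 0)
      = p ^ T.card := by
  simp only [mul_ite, mul_one, mul_zero]
  rw [← Finset.sum_filter]
  have key : ∑ S ∈ U.powerset.filter (fun S => T ⊆ S),
        p ^ S.card * (1 - p) ^ (U.card - S.card)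
      = ∑ S' ∈ (U \ T).powerset, p ^ (S'.card + T.card) * (1 - p) ^ ((U \ T).card - S'.card) := by
    refine Finset.sum_nbij' (fun S => S \ T) (fun S' => S' ∪ T) ?_ ?_ ?_ ?_ ?_
    · intro S hS
      simp only [Finset.mem_filter, Finset.mem_powerset] at hS ⊢
      exact Finset.sdiff_subset_sdiff hS.1 le_rfl
    · intro S' hS'
      simp only [Finset.mem_filter, Finset.mem_powerset] at hS' ⊢
      constructor
      · exact Finset.union_subset (hS'.trans (Finset.sdiff_subset)) hT
      · exact Finset.subset_union_right
    · intro S hS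
      simp only [Finset.mem_filter, Finset.mem_powerset] at hS
      exact Finset.sdiff_union_of_subset hS.2
    · intro S' hS'
      simp only [Finset.mem_powerset] at hS'
      have hd : Disjoint S' T := Finset.disjoint_of_subset_left hS' Finset.sdiff_disjoint
      rw [Finset.union_sdiff_distrib, Finset.sdiff_self, Finset.union_empty,
        Finset.sdiff_eq_self_of_disjoint hd]
    · intro S hS
      simp only [Finset.mem_filter, Finset.mem_powerset] at hS
      have h1 : T.card ≤ S.card := Finset.card_le_card hS.2
      have h2 : S.card ≤ U.card := Finset.card_le_card hS.1
      have h3 : (S \ T).card = S.card - T.card := Finset.card_sdiff_of_subset hS.2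
      have h4 : (U \ T).card = U.card - T.card := Finset.card_sdiff_of_subset hT
      have h5 : T.card ≤ U.card := Finset.card_le_card hT
      congr 1
      · congr 1; omega
      · congr 1; omega
  rw [key]
  have := sum_powerset_weight (U \ T) p
  calc ∑ S' ∈ (U \ T).powerset, p ^ (S'.card + T.card) * (1 - p) ^ ((U \ T).card - S'.card)
      = p ^ T.card * ∑ S' ∈ (U \ T).powerset, p ^ S'.card * (1 - p) ^ ((U \ T).card - S'.card) := by
        rw [Finset.mul_sum]; refine Finset.sum_congr rfl fun S' _ => by ring
    _ = p ^ T.card := by rw [this, mul_one]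

lemma FEdge_mem_of_mem_edge {r : ℕ} {V : Type*} {h : FEdge V} {F : SimpleGraph (Fin r)}
    (hc : FEdge.IsCopyOf h F) {e : Sym2 V} (he : e ∈ h.2) : ∀ x ∈ e, x ∈ h.1 := by
  obtain ⟨φ, hinj, h1, h2⟩ := hc
  intro x hx
  have hmem : e ∈ (↑h.2 : Set (Sym2 V)) := he
  rw [h2] at hmem
  obtain ⟨e₀, _, rfl⟩ := hmem
  rw [Sym2.mem_map] at hx
  obtain ⟨y, _, rfl⟩ := hx
  have : φ y ∈ (↑h.1 : Set V) := by rw [h1]; exact ⟨y, rfl⟩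
  exact this

lemma sym2_map_injOn {W : Type*} {ψ : ℕ → W} {s : Set ℕ} (hinj : Set.InjOn ψ s) :
    Set.InjOn (Sym2.map ψ) {e : Sym2 ℕ | ∀ x ∈ e, x ∈ s} := by
  intro e he e' he' hee
  induction e using Sym2.ind with
  | _ a b =>
    induction e' using Sym2.ind with
    | _ c d =>
      simp only [Set.mem_setOf_eq, Sym2.mem_iff] at he he'
      have ha := he a (Or.inl rfl); have hb := he b (Or.inr rfl)
      have hc := he' c (Or.inl rfl); have hd := he' d (Or.inr rfl)
      simp only [Sym2.map_pair_eq, Sym2.eq_iff] at hee ⊢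
      rcases hee with ⟨h1, h2⟩ | ⟨h1, h2⟩
      · exact Or.inl ⟨hinj ha hc h1, hinj hb hd h2⟩
      · exact Or.inr ⟨hinj ha hd h1, hinj hb hc h2⟩

lemma fedge_map_inj {n r : ℕ} {F : SimpleGraph (Fin r)} {A : FGraph ℕ}
    (hwf : FGraph.Wf A F) {ψ : ℕ → Fin n} (hinj : Set.InjOn ψ ↑A.1) :
    ∀ h ∈ A.2, ∀ h' ∈ A.2, FEdge.map ψ h = FEdge.map ψ h' → h = h' := by
  intro h hh h' hh' he
  obtain ⟨hc, hsub⟩ := hwf h hh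
  obtain ⟨hc', hsub'⟩ := hwf h' hh'
  have e1 : h.1.image ψ = h'.1.image ψ := congrArg Prod.fst he
  have e2 : h.2.image (Sym2.map ψ) = h'.2.image (Sym2.map ψ) := congrArg Prod.snd he
  have f1 : h.1 = h'.1 := by
    apply Finset.coe_injective
    have := congrArg (fun t : Finset (Fin n) => (↑t : Set (Fin n))) e1
    simp only [Finset.coe_image] at this
    exact (hinj.image_eq_image_iff (by exact_mod_cast hsub) (by exact_mod_cast hsub')).mp this
  have f2 : h.2 = h'.2 := by
    apply Finset.coe_injective
    have := congrArg (fun t : Finset (Sym2 (Fin n)) => (↑t : Set (Sym2 (Fin n)))) e2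
    simp only [Finset.coe_image] at this
    refine ((sym2_map_injOn hinj).image_eq_image_iff ?_ ?_).mp this
    · intro e hee
      exact fun x hx => hsub (FEdge_mem_of_mem_edge hc hee x hx)
    · intro e hee
      exact fun x hx => hsub' (FEdge_mem_of_mem_edge hc' hee x hx)
  exact Prod.ext f1 f2

lemma iso_edge_card {r n : ℕ} {F : SimpleGraph (Fin r)} {A : FGraph ℕ} (hwf : FGraph.Wf A F)
    {K : FGraph (Fin n)} (hiso : FGraph.IsoTo A K) : K.2.card = A.2.card := by
  obtain ⟨ψ, hinj, rfl⟩ := hiso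
  show (A.2.image (FEdge.map ψ)).card = A.2.card
  apply Finset.card_image_of_injOn
  intro h hh h' hh' he
  exact fedge_map_inj hwf hinj h hh h' hh' he

lemma fgraph_map_congr {n r : ℕ} {F : SimpleGraph (Fin r)} {A : FGraph ℕ}
    (hwf : FGraph.Wf A F) {ψ ψ' : ℕ → Fin n}
    (hag : ∀ x ∈ A.1, ψ x = ψ' x) : FGraph.map ψ A = FGraph.map ψ' A := by
  unfold FGraph.map
  have e1 : A.1.image ψ = A.1.image ψ' := Finset.image_congr fun x hx => hag x hx
  have e2 : A.2.image (FEdge.map ψ) = A.2.image (FEdge.map ψ') := by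
    apply Finset.image_congr
    intro h hh
    obtain ⟨hc, hsub⟩ := hwf h hh
    unfold FEdge.map
    have g1 : h.1.image ψ = h.1.image ψ' := Finset.image_congr fun x hx => hag x (hsub hx)
    have g2 : h.2.image (Sym2.map ψ) = h.2.image (Sym2.map ψ') := by
      apply Finset.image_congr
      intro e hee
      induction e using Sym2.ind with
      | _ a b =>
        have ha := FEdge_mem_of_mem_edge hc hee a (by simp)
        have hb := FEdge_mem_of_mem_edge hc hee b (by simp)
        rw [Sym2.map_pair_eq, Sym2.map_pair_eq, hag a (hsub ha), hag b (hsub hb)]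
    rw [g1, g2]
  rw [e1, e2]

lemma card_copies_le {r n : ℕ} {F : SimpleGraph (Fin r)} {A : FGraph ℕ}
    (hwf : FGraph.Wf A F) {a₀ : ℕ} (ha₀ : a₀ ∈ A.1) :
    (Finset.univ.filter fun K : FGraph (Fin n) => FGraph.IsoTo A K).card ≤ n ^ A.1.card := by
  classical
  set Φ : (↥A.1 → Fin n) → FGraph (Fin n) := fun f =>
    FGraph.map (fun x => if hx : x ∈ A.1 then f ⟨x, hx⟩ else f ⟨a₀, ha₀⟩) A with hΦ
  have hsurj : Set.SurjOn Φ ↑(Finset.univ : Finset (↥A.1 → Fin n))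
      ↑(Finset.univ.filter fun K : FGraph (Fin n) => FGraph.IsoTo A K) := by
    intro K hK
    simp only [Finset.coe_filter, Set.mem_setOf_eq] at hK
    obtain ⟨-, ψ, hψinj, hψmap⟩ := hK
    refine ⟨fun x => ψ x.1, Finset.mem_coe.mpr (Finset.mem_univ _), ?_⟩
    rw [hΦ]
    dsimp only
    rw [← hψmap]
    symm
    refine fgraph_map_congr hwf fun x hx => ?_
    simp [hx]
  have hcard := Finset.card_le_card_of_surjOn Φ hsurj
  calc (Finset.univ.filter fun K : FGraph (Fin n) => FGraph.IsoTo A K).card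
      ≤ (Finset.univ : Finset (↥A.1 → Fin n)).card := hcard
    _ = n ^ A.1.card := by
        rw [Finset.card_univ, Fintype.card_fun, Fintype.card_fin, Fintype.card_coe]

lemma hfProb_nonneg {r n : ℕ} (F : SimpleGraph (Fin r)) (p : ℝ) (hp0 : 0 ≤ p) (hp1 : p ≤ 1)
    (P : Finset (FEdge (Fin n)) → Prop) : 0 ≤ hfProb r n F p P := by
  unfold hfProb hfExp
  apply Finset.sum_nonneg
  intro S _
  have h1 : (0:ℝ) ≤ if P S then 1 else 0 := by split_ifs <;> norm_num
  have hw : (0:ℝ) ≤ p ^ S.card * (1 - p) ^ ((allFEdges r n F).card - S.card) :=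
    mul_nonneg (pow_nonneg hp0 _) (pow_nonneg (by linarith) _)
  exact mul_nonneg hw h1

lemma sum_ind_le {α β : Type*} [DecidableEq α] (U : Finset α) (p : ℝ) (hp0 : 0 ≤ p)
    (hp1 : p ≤ 1) (P : Finset α → Prop) (G : Finset β) (T : β → Finset α) (m : ℕ)
    (hP : ∀ S ∈ U.powerset, P S → ∃ b ∈ G, T b ⊆ S)
    (hm : ∀ b ∈ G, (T b).card = m) :
    ∑ S ∈ U.powerset, p ^ S.card * (1 - p) ^ (U.card - S.card) * (if P S then (1:ℝ) else 0)
      ≤ (G.card : ℝ) * p ^ m := by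
  classical
  have hw : ∀ S : Finset α, (0:ℝ) ≤ p ^ S.card * (1-p) ^ (U.card - S.card) :=
    fun S => mul_nonneg (pow_nonneg hp0 _) (pow_nonneg (by linarith) _)
  have step1 : ∀ S ∈ U.powerset,
      (if P S then (1:ℝ) else 0) ≤ ∑ b ∈ G, (if T b ⊆ S then (1:ℝ) else 0) := by
    intro S hS
    split_ifs with h
    · obtain ⟨b, hb, hbS⟩ := hP S hS h
      calc (1:ℝ) = (if T b ⊆ S then (1:ℝ) else 0) := by simp [hbS]
        _ ≤ ∑ b ∈ G, (if T b ⊆ S then (1:ℝ) else 0) :=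
            Finset.single_le_sum (f := fun b => if T b ⊆ S then (1:ℝ) else 0)
              (fun k _ => by split_ifs <;> norm_num) hb
    · exact Finset.sum_nonneg fun k _ => by split_ifs <;> norm_num
  calc ∑ S ∈ U.powerset, p ^ S.card * (1 - p) ^ (U.card - S.card) * (if P S then (1:ℝ) else 0)
      ≤ ∑ S ∈ U.powerset, p ^ S.card * (1 - p) ^ (U.card - S.card) *
          ∑ b ∈ G, (if T b ⊆ S then (1:ℝ) else 0) := by
        refine Finset.sum_le_sum fun S hS => ?_
        exact mul_le_mul_of_nonneg_left (step1 S hS) (hw S)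
    _ = ∑ b ∈ G, ∑ S ∈ U.powerset,
          p ^ S.card * (1 - p) ^ (U.card - S.card) * (if T b ⊆ S then (1:ℝ) else 0) := by
        simp_rw [Finset.mul_sum]
        exact Finset.sum_comm
    _ ≤ ∑ b ∈ G, p ^ m := by
        refine Finset.sum_le_sum fun b hb => ?_
        by_cases hsub : T b ⊆ U
        · rw [cond_sum U (T b) hsub p, hm b hb]
        · have hz : ∀ S ∈ U.powerset,
              p ^ S.card * (1-p) ^ (U.card - S.card) * (if T b ⊆ S then (1:ℝ) else 0) = 0 := by
            intro S hS
            have : ¬ T b ⊆ S := fun hc => hsub (hc.trans (Finset.mem_powerset.mp hS))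
            simp [this]
          rw [Finset.sum_congr rfl hz, Finset.sum_const_zero]
          exact pow_nonneg hp0 _
    _ = (G.card : ℝ) * p ^ m := by rw [Finset.sum_const, nsmul_eq_mul]

lemma prob_le {r n : ℕ} (F : SimpleGraph (Fin r)) (A : FGraph ℕ) (hwf : FGraph.Wf A F)
    {a₀ : ℕ} (ha₀ : a₀ ∈ A.1) (p : ℝ) (hp0 : 0 ≤ p) (hp1 : p ≤ 1) :
    hfProb r n F p (fun S => ∃ K : FGraph (Fin n), K.2 ⊆ S ∧ FGraph.IsoTo A K)
      ≤ (n : ℝ) ^ A.1.card * p ^ A.2.card := by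
  have key := sum_ind_le (allFEdges r n F) p hp0 hp1
    (fun S => ∃ K : FGraph (Fin n), K.2 ⊆ S ∧ FGraph.IsoTo A K)
    (Finset.univ.filter fun K : FGraph (Fin n) => FGraph.IsoTo A K)
    (fun K => K.2) A.2.card
    (by
      intro S _ hPS
      obtain ⟨K, hKS, hKiso⟩ := hPS
      exact ⟨K, by simp [hKiso], hKS⟩)
    (by
      intro K hK
      have hKiso : FGraph.IsoTo A K := by simpa using hK
      exact iso_edge_card hwf hKiso)
  refine le_trans key ?_
  apply mul_le_mul_of_nonneg_right _ (pow_nonneg hp0 _)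
  calc ((Finset.univ.filter fun K : FGraph (Fin n) => FGraph.IsoTo A K).card : ℝ)
      ≤ ((n ^ A.1.card : ℕ) : ℝ) := by exact_mod_cast card_copies_le hwf ha₀
    _ = (n : ℝ) ^ A.1.card := by push_cast; ring

lemma autCard_pos {r : ℕ} (F : SimpleGraph (Fin r)) : 0 < autCard F := by
  have : Finite (F ≃g F) := Finite.of_injective _ RelIso.toEquiv_injective
  have : Nonempty (F ≃g F) := ⟨RelIso.refl _⟩
  exact Nat.card_pos

lemma autCard_le {r : ℕ} (F : SimpleGraph (Fin r)) : autCard F ≤ r.factorial := by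
  have h := Nat.card_le_card_of_injective _ (RelIso.toEquiv_injective (r := F.Adj) (s := F.Adj))
  calc autCard F ≤ Nat.card (Fin r ≃ Fin r) := h
    _ = r.factorial := by
      rw [Nat.card_eq_fintype_card]
      simp [Fintype.card_perm]

lemma compCount_eq_one {V : Type*} [DecidableEq V] {H : FGraph V}
    (hconn : FGraphConnected H) : compCount H = 1 := by
  rw [compCount, Nat.card_eq_one_iff_unique]
  constructor
  · constructor
    intro a b
    refine SimpleGraph.ConnectedComponent.ind₂ (fun x y => ?_) a b
    exact SimpleGraph.ConnectedComponent.sound (hconn.preconnected x y)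
  · obtain ⟨x⟩ := hconn.nonempty
    exact ⟨SimpleGraph.connectedComponentMk _ x⟩

lemma copy_vert_card {r : ℕ} {V : Type*} [DecidableEq V] {h : FEdge V}
    {F : SimpleGraph (Fin r)} (hc : FEdge.IsCopyOf h F) : h.1.card = r := by
  obtain ⟨φ, hinj, h1, -⟩ := hc
  have : h.1 = Finset.univ.image φ := by
    apply Finset.coe_injective
    rw [Finset.coe_image, Finset.coe_univ, Set.image_univ, h1]
  rw [this, Finset.card_image_of_injective _ hinj, Finset.card_univ, Fintype.card_fin]


/-- For a fixed avoidable configuration `A` and constant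
`0 < ε < (n(A)-1)/e(A)`, whp `H_F(n,π)` contains no copy of `A`. -/
theorem no_avoidable_configuration {r : ℕ} (hr : 3 ≤ r) (F : SimpleGraph (Fin r))
    (hFconn : F.Connected) (A : FGraph ℕ) (hA : Avoidable F A)
    (ε : ℝ) (hε0 : 0 < ε) (hεA : ε < ((nullity r A : ℝ) - 1) / (A.2.card : ℝ))
    (π : ℕ → ℝ) (hπ0 : ∀ n, 0 ≤ π n)
    (hπ : ∀ n : ℕ, π n ≤ (n : ℝ) ^ ε /
      (((r.factorial : ℝ) / (autCard F : ℝ)) * ((n - 1).choose (r - 1) : ℝ))) :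
    Filter.Tendsto
      (fun n : ℕ => hfProb r n F (π n)
        fun S => ∃ K : FGraph (Fin n), K.2 ⊆ S ∧ FGraph.IsoTo A K)
      Filter.atTop (nhds 0) := by
  obtain ⟨hwf, hconn, hnull⟩ := hA
  -- the number of F-edges of A is positive
  have hm1 : 1 ≤ A.2.card := by
    by_contra hcon
    have hz : A.2.card = 0 := by omega
    rw [hz] at hεA
    norm_num at hεA
    linarith
  -- A has at least r vertices, and a vertex a₀
  obtain ⟨h₀, hh₀⟩ := Finset.card_pos.mp (by omega : 0 < A.2.card)
  obtain ⟨hc₀, hsub₀⟩ := hwf h₀ hh₀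
  have hrv : r ≤ A.1.card := by
    have hcv := copy_vert_card hc₀
    calc r = h₀.1.card := hcv.symm
      _ ≤ A.1.card := Finset.card_le_card hsub₀
  obtain ⟨a₀, ha₀⟩ := Finset.card_pos.mp (by omega : 0 < A.1.card)
  -- nullity formula and exponent estimates
  have hcomp := compCount_eq_one hconn
  have hnul : (nullity r A : ℝ) = ((r:ℝ) - 1) * A.2.card + 1 - A.1.card := by
    rw [nullity, hcomp]; push_cast; ring
  have hmR : (0:ℝ) < (A.2.card:ℝ) := by exact_mod_cast hm1
  have hεm : ε * A.2.card < ((r:ℝ)-1) * A.2.card - A.1.card := by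
    have h := (lt_div_iff₀ hmR).mp hεA
    linarith [hnul]
  have hvR : (0:ℝ) < (A.1.card : ℝ) := by
    have : 0 < A.1.card := by omega
    exact_mod_cast this
  have hδ : (A.1.card:ℝ) + (ε - ((r:ℝ)-1)) * A.2.card < 0 := by nlinarith
  have hεr : ε - ((r:ℝ)-1) < 0 := by
    have h2 : ε * A.2.card < ((r:ℝ)-1) * A.2.card := by linarith
    have := (mul_lt_mul_iff_of_pos_right hmR).mp h2
    linarith
  -- constants
  set D : ℝ := ((r-1).factorial : ℝ) * 2 ^ (r-1) with hD
  have hDpos : 0 < D := by positivity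
  have hc1 : (1:ℝ) ≤ (r.factorial:ℝ)/(autCard F:ℝ) := by
    rw [le_div_iff₀ (by exact_mod_cast autCard_pos F)]
    have := autCard_le F
    rw [one_mul]
    exact_mod_cast this
  have hrcast : ((r-1:ℕ):ℝ) = (r:ℝ) - 1 := by
    have : 1 ≤ r := by omega
    push_cast [this]
    ring
  -- the majorant for π
  set g : ℕ → ℝ := fun n => D * (n:ℝ) ^ (ε - ((r:ℝ)-1)) with hg
  have hπg : ∀ᶠ n : ℕ in Filter.atTop, π n ≤ g n := by
    filter_upwards [Filter.eventually_ge_atTop (2*r)] with n hn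
    have hnR : (0:ℝ) < n := by
      have : 0 < n := by omega
      exact_mod_cast this
    -- lower bound on the binomial coefficient
    have base : ((n:ℝ)/2) ≤ ((n - (r-1) : ℕ):ℝ) := by
      have hcast : ((n - (r-1) : ℕ):ℝ) = (n:ℝ) - ((r:ℝ)-1) := by
        rw [Nat.cast_sub (by omega : r - 1 ≤ n), hrcast]
      rw [hcast]
      have h2r : (2:ℝ) * r ≤ n := by exact_mod_cast hn
      linarith
    have hpow : ((n:ℝ)^(r-1))/2^(r-1) ≤ (((n-(r-1):ℕ):ℝ))^(r-1) := by
      rw [← div_pow]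
      exact pow_le_pow_left₀ (by positivity) base _
    have hPLC := Nat.pow_le_choose (α := ℝ) (r-1) (n-1)
    have e1 : (n-1) + 1 - (r-1) = n - (r-1) := by omega
    rw [e1] at hPLC
    have hC : (n:ℝ)^(r-1)/D ≤ (((n-1).choose (r-1) : ℕ) : ℝ) := by
      calc (n:ℝ)^(r-1)/D = ((n:ℝ)^(r-1)/2^(r-1))/((r-1).factorial : ℝ) := by
            rw [div_div, hD]; ring_nf
        _ ≤ ((((n-(r-1):ℕ):ℝ))^(r-1))/((r-1).factorial : ℝ) := by gcongr
        _ ≤ (((n-1).choose (r-1) : ℕ) : ℝ) := hPLC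
    have hCpos : (0:ℝ) < (n:ℝ)^(r-1)/D := by positivity
    have hden : (n:ℝ)^(r-1)/D ≤ ((r.factorial:ℝ)/(autCard F:ℝ)) * (((n-1).choose (r-1) : ℕ):ℝ) :=
      le_trans hC (le_mul_of_one_le_left (by positivity) hc1)
    calc π n ≤ (n:ℝ)^ε / (((r.factorial:ℝ)/(autCard F:ℝ)) * (((n-1).choose (r-1) : ℕ):ℝ)) := hπ n
      _ ≤ (n:ℝ)^ε / ((n:ℝ)^(r-1)/D) := by
          apply div_le_div_of_nonneg_left (Real.rpow_nonneg hnR.le ε) hCpos hden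
      _ = g n := by
          show _ = D * (n:ℝ) ^ (ε - ((r:ℝ)-1))
          rw [div_div_eq_mul_div, Real.rpow_sub hnR, ← hrcast, Real.rpow_natCast]
          ring
  -- the majorant tends to 0
  have hgten : Filter.Tendsto g Filter.atTop (nhds 0) := by
    have h1 : Filter.Tendsto (fun x : ℝ => x ^ (ε - ((r:ℝ)-1))) Filter.atTop (nhds 0) := by
      have := tendsto_rpow_neg_atTop (show 0 < -(ε - ((r:ℝ)-1)) by linarith)
      simpa using this
    have h2 := h1.comp (tendsto_natCast_atTop_atTop (R := ℝ))
    have h3 := h2.const_mul D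
    simpa [hg, Function.comp] using h3
  have hπten : Filter.Tendsto π Filter.atTop (nhds 0) :=
    squeeze_zero' (Filter.Eventually.of_forall hπ0) hπg hgten
  have hπ1 : ∀ᶠ n : ℕ in Filter.atTop, π n < 1 := by
    have := hπten.eventually_lt_const (show (0:ℝ) < 1 by norm_num)
    exact this
  -- the final majorant
  set B : ℕ → ℝ := fun n => (D ^ A.2.card) * (n:ℝ) ^ ((A.1.card:ℝ) + (ε - ((r:ℝ)-1)) * A.2.card)
    with hB
  have hmain : ∀ᶠ n : ℕ in Filter.atTop,
      hfProb r n F (π n) (fun S => ∃ K : FGraph (Fin n), K.2 ⊆ S ∧ FGraph.IsoTo A K) ≤ B n := by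
    filter_upwards [hπg, hπ1, Filter.eventually_ge_atTop 1] with n hgn h1n hn1
    have hb := prob_le (n := n) F A hwf ha₀ (π n) (hπ0 n) (le_of_lt h1n)
    refine hb.trans ?_
    have hnR : (0:ℝ) < n := by
      have : 0 < n := by omega
      exact_mod_cast this
    calc (n:ℝ)^A.1.card * (π n)^A.2.card ≤ (n:ℝ)^A.1.card * (g n)^A.2.card := by
          apply mul_le_mul_of_nonneg_left (pow_le_pow_left₀ (hπ0 n) hgn _) (by positivity)
      _ = B n := by
          rw [hB, hg]
          rw [mul_pow]
          rw [← Real.rpow_natCast ((n:ℝ) ^ (ε - ((r:ℝ)-1))) A.2.card,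
            ← Real.rpow_mul hnR.le, ← Real.rpow_natCast (n:ℝ) A.1.card]
          show _ = D ^ A.2.card * (n:ℝ) ^ ((A.1.card:ℝ) + (ε - ((r:ℝ)-1)) * (A.2.card:ℝ))
          rw [Real.rpow_add hnR]
          ring
  have hBten : Filter.Tendsto B Filter.atTop (nhds 0) := by
    have h1 : Filter.Tendsto (fun x : ℝ => x ^ ((A.1.card:ℝ) + (ε - ((r:ℝ)-1)) * A.2.card))
        Filter.atTop (nhds 0) := by
      have := tendsto_rpow_neg_atTop (show 0 < -((A.1.card:ℝ) + (ε - ((r:ℝ)-1)) * A.2.card)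
        by linarith)
      simpa using this
    have h2 := h1.comp (tendsto_natCast_atTop_atTop (R := ℝ))
    have h3 := h2.const_mul (D ^ A.2.card)
    simpa [hB, Function.comp] using h3
  have hnn : ∀ᶠ n : ℕ in Filter.atTop,
      0 ≤ hfProb r n F (π n) (fun S => ∃ K : FGraph (Fin n), K.2 ⊆ S ∧ FGraph.IsoTo A K) := by
    filter_upwards [hπ1] with n h1n
    exact hfProb_nonneg F (π n) (hπ0 n) (le_of_lt h1n) _
  exact squeeze_zero' hnn hmain hBten

end
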